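/- Let X be a complete CAT(0) space, C₁, C₂ ⊆ X closed convex subsets and ε > 0. If C₁ ∪ C₂ is connected and for every x in the intersection of the topological boundaries ∂C₁ ∩ ∂C₂ the set B_ε(x) ∩ (C₁ ∪ C₂) is convex, then C₁ ∪ C₂ is convex. -/

import Mathlib

open Set Metric

/-- A CAT(0) space structure: a geodesic bicombing (affinely parametrized on `[0,1]`)
satisfying the CAT(0) comparison inequality. -/
class CAT0 (X : Type*) [MetricSpace X] where
  geo : X → X → ℝ → X
  geo_zero : ∀ x y, geo x y 0 = x
  geo_one : ∀ x y, geo x y 1 = y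
  geo_dist : ∀ x y, ∀ s ∈ Set.Icc (0:ℝ) 1, ∀ t ∈ Set.Icc (0:ℝ) 1,
    dist (geo x y s) (geo x y t) = |s - t| * dist x y
  comparison : ∀ x y z, ∀ t ∈ Set.Icc (0:ℝ) 1,
    dist (geo x y t) z ^ 2 ≤ (1 - t) * dist x z ^ 2 + t * dist y z ^ 2
      - t * (1 - t) * dist x y ^ 2

/-- The geodesic segment between `x` and `y`. -/
def geoSeg (X : Type*) [MetricSpace X] [CAT0 X] (x y : X) : Set X :=
  (fun t => CAT0.geo x y t) '' Set.Icc (0:ℝ) 1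

/-- A subset is (geodesically) convex if it contains the geodesic segment
between any two of its points. -/
def GConvex (X : Type*) [MetricSpace X] [CAT0 X] (C : Set X) : Prop :=
  ∀ x ∈ C, ∀ y ∈ C, geoSeg X x y ⊆ C
section Lemmas
open CAT0
variable {X : Type*} [MetricSpace X] [CAT0 X]

lemma le_of_sq_le_sq' {a b : ℝ} (h : a ^ 2 ≤ b ^ 2) (ha : 0 ≤ a) (hb : 0 ≤ b) :
    a ≤ b := by nlinarith

lemma geo_mem_seg (x y : X) {t : ℝ} (ht : t ∈ Icc (0:ℝ) 1) :
    geo x y t ∈ geoSeg X x y := ⟨t, ht, rfl⟩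

lemma dist_geo_left (x y : X) {t : ℝ} (ht : t ∈ Icc (0:ℝ) 1) :
    dist (geo x y t) x = t * dist x y := by
  have h := geo_dist x y t ht 0 ⟨le_refl _, zero_le_one⟩
  rw [geo_zero] at h
  simpa [abs_of_nonneg ht.1] using h

lemma dist_geo_right (x y : X) {t : ℝ} (ht : t ∈ Icc (0:ℝ) 1) :
    dist (geo x y t) y = (1 - t) * dist x y := by
  have h := geo_dist x y t ht 1 ⟨zero_le_one, le_refl _⟩
  rw [geo_one] at h
  rw [h, abs_of_nonpos (by linarith [ht.2])]
  ring

lemma geo_unique {x y p : X} {t : ℝ} (ht : t ∈ Icc (0:ℝ) 1)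
    (h1 : dist x p = t * dist x y) (h2 : dist p y = (1 - t) * dist x y) :
    geo x y t = p := by
  have hc := comparison x y p t ht
  have hyp : dist y p = (1 - t) * dist x y := by rw [dist_comm]; exact h2
  rw [h1, hyp] at hc
  have h0 : dist (geo x y t) p ^ 2 ≤ 0 := by nlinarith [hc]
  have : dist (geo x y t) p = 0 := by nlinarith [dist_nonneg (x := geo x y t) (y := p), sq_nonneg (dist (geo x y t) p)]
  exact eq_of_dist_eq_zero this

lemma geo_reparam (x y : X) {u v t : ℝ} (hu : u ∈ Icc (0:ℝ) 1)
    (hv : v ∈ Icc (0:ℝ) 1) (ht : t ∈ Icc (0:ℝ) 1) :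
    geo (geo x y u) (geo x y v) t = geo x y (u + t * (v - u)) := by
  have hw : u + t * (v - u) ∈ Icc (0:ℝ) 1 := by
    constructor <;> nlinarith [ht.1, ht.2, hu.1, hu.2, hv.1, hv.2]
  apply geo_unique ht
  · rw [geo_dist x y u hu (u + t * (v - u)) hw, geo_dist x y u hu v hv,
      show u - (u + t * (v - u)) = t * (u - v) by ring, abs_mul,
      abs_of_nonneg ht.1]
    ring
  · rw [geo_dist x y (u + t * (v - u)) hw v hv, geo_dist x y u hu v hv,
      show u + t * (v - u) - v = (1 - t) * (u - v) by ring, abs_mul,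
      abs_of_nonneg (by linarith [ht.2] : (0:ℝ) ≤ 1 - t)]
    ring

lemma dist_geo_geo_right (x y y' : X) {t : ℝ} (ht : t ∈ Icc (0:ℝ) 1) :
    dist (geo x y t) (geo x y' t) ≤ t * dist y y' := by
  have c1 := comparison x y (geo x y' t) t ht
  have c2 := comparison x y' y t ht
  have hxz : dist x (geo x y' t) = t * dist x y' := by
    rw [dist_comm]; exact dist_geo_left x y' ht
  have hyz : dist y (geo x y' t) = dist (geo x y' t) y := dist_comm _ _
  rw [hxz, hyz] at c1
  rw [dist_comm y' y] at c2
  have c2' := mul_le_mul_of_nonneg_left c2 ht.1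
  have hsq : dist (geo x y t) (geo x y' t) ^ 2 ≤ (t * dist y y') ^ 2 := by
    nlinarith [c1, c2']
  exact le_of_sq_le_sq' hsq dist_nonneg
    (mul_nonneg ht.1 (dist_nonneg (x := y) (y := y')))

lemma geo_symm (x y : X) {t : ℝ} (ht : t ∈ Icc (0:ℝ) 1) :
    geo x y t = geo y x (1 - t) := by
  have h1t : 1 - t ∈ Icc (0:ℝ) 1 := ⟨by linarith [ht.2], by linarith [ht.1]⟩
  symm
  apply geo_unique h1t
  · rw [dist_comm, dist_geo_right x y ht, dist_comm x y]
  · rw [dist_comm y x, dist_geo_left x y ht]; ring_nf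

lemma dist_geo_geo (x x' y y' : X) {t : ℝ} (ht : t ∈ Icc (0:ℝ) 1) :
    dist (geo x y t) (geo x' y' t) ≤ (1 - t) * dist x x' + t * dist y y' := by
  have h1t : 1 - t ∈ Icc (0:ℝ) 1 := ⟨by linarith [ht.2], by linarith [ht.1]⟩
  calc dist (geo x y t) (geo x' y' t)
      ≤ dist (geo x y t) (geo x y' t) + dist (geo x y' t) (geo x' y' t) :=
        dist_triangle _ _ _
    _ ≤ t * dist y y' + (1 - t) * dist x x' := by
        gcongr ?_ + ?_
        · exact dist_geo_geo_right x y y' ht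
        · rw [geo_symm x y' ht, geo_symm x' y' ht]
          exact dist_geo_geo_right y' x x' h1t
    _ = (1 - t) * dist x x' + t * dist y y' := by ring

lemma dist_geo_pt (x y c : X) {t : ℝ} (ht : t ∈ Icc (0:ℝ) 1) :
    dist (geo x y t) c ≤ max (dist x c) (dist y c) := by
  have hc := comparison x y c t ht
  have h1 : dist x c ≤ max (dist x c) (dist y c) := le_max_left _ _
  have h2 : dist y c ≤ max (dist x c) (dist y c) := le_max_right _ _
  have hm : 0 ≤ max (dist x c) (dist y c) :=
    le_trans dist_nonneg (le_max_left _ _)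
  have ha2 : dist x c ^ 2 ≤ max (dist x c) (dist y c) ^ 2 := by
    nlinarith [dist_nonneg (x := x) (y := c)]
  have hb2 : dist y c ^ 2 ≤ max (dist x c) (dist y c) ^ 2 := by
    nlinarith [dist_nonneg (x := y) (y := c)]
  have hsq : dist (geo x y t) c ^ 2 ≤ max (dist x c) (dist y c) ^ 2 := by
    nlinarith [hc, ht.1, ht.2,
      mul_nonneg (mul_nonneg ht.1 (by linarith [ht.2] : (0:ℝ) ≤ 1 - t))
        (sq_nonneg (dist x y))]
  exact le_of_sq_le_sq' hsq dist_nonneg hm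

lemma geo_continuousOn (x y : X) :
    ContinuousOn (fun t => geo x y t) (Icc (0:ℝ) 1) := by
  have : LipschitzOnWith (nndist x y) (fun t => geo x y t) (Icc (0:ℝ) 1) := by
    rw [lipschitzOnWith_iff_dist_le_mul]
    intro s hs t ht
    rw [geo_dist x y s hs t ht, coe_nndist, Real.dist_eq, mul_comm]
  exact this.continuousOn

end Lemmas
section LocConv
open CAT0
variable {X : Type*} [MetricSpace X] [CAT0 X]

/-- The union of two closed convex sets is locally convex under the
frontier hypothesis. -/
lemma union_locConv {C₁ C₂ : Set X} (h₁closed : IsClosed C₁)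
    (h₂closed : IsClosed C₂) (h₁conv : GConvex X C₁) (h₂conv : GConvex X C₂)
    {ε : ℝ} (hε : 0 < ε)
    (hloc : ∀ x ∈ frontier C₁ ∩ frontier C₂,
      GConvex X (closedBall x ε ∩ (C₁ ∪ C₂))) :
    ∀ p ∈ C₁ ∪ C₂, ∃ r > 0, ∀ u v, u ∈ C₁ ∪ C₂ → v ∈ C₁ ∪ C₂ →
      dist u p ≤ r → dist v p ≤ r → ∀ t ∈ Icc (0:ℝ) 1, geo u v t ∈ C₁ ∪ C₂ := by
  intro p hp
  -- case : p ∉ C₂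
  by_cases hp2 : p ∈ C₂
  · by_cases hp1 : p ∈ C₁
    · by_cases hi1 : p ∈ interior C₁
      · obtain ⟨r, hr, hball⟩ := Metric.isOpen_iff.mp isOpen_interior p hi1
        refine ⟨r / 2, by linarith, fun u v hu hv hu' hv' t ht => ?_⟩
        have huC : u ∈ C₁ := interior_subset (hball (by
          rw [mem_ball]; linarith))
        have hvC : v ∈ C₁ := interior_subset (hball (by
          rw [mem_ball]; linarith))
        exact Or.inl (h₁conv u huC v hvC (geo_mem_seg u v ht))
      · by_cases hi2 : p ∈ interior C₂
        · obtain ⟨r, hr, hball⟩ := Metric.isOpen_iff.mp isOpen_interior p hi2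
          refine ⟨r / 2, by linarith, fun u v hu hv hu' hv' t ht => ?_⟩
          have huC : u ∈ C₂ := interior_subset (hball (by rw [mem_ball]; linarith))
          have hvC : v ∈ C₂ := interior_subset (hball (by rw [mem_ball]; linarith))
          exact Or.inr (h₂conv u huC v hvC (geo_mem_seg u v ht))
        · -- frontier ∩ frontier
          have hpf : p ∈ frontier C₁ ∩ frontier C₂ := by
            rw [h₁closed.frontier_eq, h₂closed.frontier_eq]
            exact ⟨⟨hp1, hi1⟩, ⟨hp2, hi2⟩⟩
          refine ⟨ε, hε, fun u v hu hv hu' hv' t ht => ?_⟩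
          have := hloc p hpf u ⟨mem_closedBall.mpr hu', hu⟩
            v ⟨mem_closedBall.mpr hv', hv⟩ (geo_mem_seg u v ht)
          exact this.2
    · -- p ∈ C₂ \ C₁
      by_cases h1ne : C₁.Nonempty
      · have hd : 0 < infDist p C₁ := by
          rcases (h₁closed.mem_iff_infDist_zero h1ne).not.mp hp1 with h
          rcases lt_or_eq_of_le (infDist_nonneg (x := p) (s := C₁)) with h' | h'
          · exact h'
          · exact absurd h'.symm h
        refine ⟨infDist p C₁ / 2, by linarith, fun u v hu hv hu' hv' t ht => ?_⟩
        have huC : u ∈ C₂ := by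
          rcases hu with hu | hu
          · exfalso
            have := infDist_le_dist_of_mem (x := p) hu
            rw [dist_comm] at this
            linarith
          · exact hu
        have hvC : v ∈ C₂ := by
          rcases hv with hv | hv
          · exfalso
            have := infDist_le_dist_of_mem (x := p) hv
            rw [dist_comm] at this
            linarith
          · exact hv
        exact Or.inr (h₂conv u huC v hvC (geo_mem_seg u v ht))
      · refine ⟨1, one_pos, fun u v hu hv hu' hv' t ht => ?_⟩
        rw [not_nonempty_iff_eq_empty] at h1ne
        subst h1ne
        simp only [empty_union] at hu hv ⊢
        exact h₂conv u (by simpa using hu) v (by simpa using hv)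
          (geo_mem_seg u v ht)
  · -- p ∉ C₂, so p ∈ C₁
    have hp1 : p ∈ C₁ := hp.resolve_right hp2
    by_cases h2ne : C₂.Nonempty
    · have hd : 0 < infDist p C₂ := by
        rcases (h₂closed.mem_iff_infDist_zero h2ne).not.mp hp2 with h
        rcases lt_or_eq_of_le (infDist_nonneg (x := p) (s := C₂)) with h' | h'
        · exact h'
        · exact absurd h'.symm h
      refine ⟨infDist p C₂ / 2, by linarith, fun u v hu hv hu' hv' t ht => ?_⟩
      have huC : u ∈ C₁ := by
        rcases hu with hu | hu
        · exact hu
        · exfalso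
          have := infDist_le_dist_of_mem (x := p) hu
          rw [dist_comm] at this
          linarith
      have hvC : v ∈ C₁ := by
        rcases hv with hv | hv
        · exact hv
        · exfalso
          have := infDist_le_dist_of_mem (x := p) hv
          rw [dist_comm] at this
          linarith
      exact Or.inl (h₁conv u huC v hvC (geo_mem_seg u v ht))
    · refine ⟨1, one_pos, fun u v hu hv hu' hv' t ht => ?_⟩
      rw [not_nonempty_iff_eq_empty] at h2ne
      subst h2ne
      simp only [union_empty] at hu hv ⊢
      exact h₁conv u hu v hv (geo_mem_seg u v ht)

end LocConv
section Perturb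
open CAT0
variable {X : Type*} [MetricSpace X] [CAT0 X]

lemma perturb {S : Set X} (hS : IsClosed S)
    (hlc : ∀ p ∈ S, ∃ r > 0, ∀ u v, u ∈ S → v ∈ S → dist u p ≤ r →
      dist v p ≤ r → ∀ t ∈ Icc (0:ℝ) 1, geo u v t ∈ S)
    (x y : X) (hx : x ∈ S)
    (hbase : ∀ t ∈ Icc (0:ℝ) 1, geo x y t ∈ S) :
    ∃ δ > 0, ∀ y' ∈ S, dist y y' ≤ δ →
      ∀ t ∈ Icc (0:ℝ) 1, geo x y' t ∈ S := by
  have hSne : S.Nonempty := ⟨x, hx⟩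
  set K : Set X := (fun t => geo x y t) '' Icc (0:ℝ) 1 with hKdef
  have hKc : IsCompact K := (isCompact_Icc).image_of_continuousOn (geo_continuousOn x y)
  have hKS : K ⊆ S := by
    rintro z ⟨t, ht, rfl⟩
    exact hbase t ht
  have hxK : x ∈ K := ⟨0, ⟨le_refl _, zero_le_one⟩, geo_zero x y⟩
  -- totalize the local convexity radius
  have hlc' : ∀ p : X, ∃ r : ℝ, 0 < r ∧ (p ∈ S → ∀ u v, u ∈ S → v ∈ S →
      dist u p ≤ r → dist v p ≤ r → ∀ t ∈ Icc (0:ℝ) 1, geo u v t ∈ S) := by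
    intro p
    by_cases hp : p ∈ S
    · obtain ⟨r, hr, hconv⟩ := hlc p hp
      exact ⟨r, hr, fun _ => hconv⟩
    · exact ⟨1, one_pos, fun h => absurd h hp⟩
  choose r hr using hlc'
  -- finite subcover
  have hcov : K ⊆ ⋃ p ∈ K, ball p (r p / 2) := fun z hz =>
    mem_biUnion hz (mem_ball_self (by linarith [(hr z).1]))
  obtain ⟨T, hTK, hTfin, hTcov⟩ :=
    hKc.elim_finite_subcover_image (fun p _ => isOpen_ball) hcov
  have hTne : T.Nonempty := by
    obtain ⟨p, hp⟩ := mem_iUnion₂.mp (hTcov hxK)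
    exact ⟨p, hp.1⟩
  set FT := hTfin.toFinset with hFTdef
  have hFTne : FT.Nonempty := by
    rw [hFTdef, Set.Finite.toFinset_nonempty]
    exact hTne
  set ρ : ℝ := FT.inf' hFTne (fun p => r p / 2) with hρdef
  have hρpos : 0 < ρ := by
    rw [hρdef, Finset.lt_inf'_iff]
    intro p hp
    linarith [(hr p).1]
  have hρle : ∀ p ∈ T, ρ ≤ r p / 2 := fun p hp =>
    Finset.inf'_le _ (by rw [hFTdef, Set.Finite.mem_toFinset]; exact hp)
  -- uniform local convexity along K
  have huni : ∀ z ∈ K, ∀ u v, u ∈ S → v ∈ S → dist u z ≤ ρ → dist v z ≤ ρ →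
      ∀ t ∈ Icc (0:ℝ) 1, geo u v t ∈ S := by
    intro z hz u v hu hv hdu hdv
    obtain ⟨p, hpT, hzp⟩ := mem_iUnion₂.mp (hTcov hz)
    have hpS : p ∈ S := hKS (hTK hpT)
    have hzp' : dist z p < r p / 2 := mem_ball.mp hzp
    have hρp := hρle p hpT
    refine (hr p).2 hpS u v hu hv ?_ ?_
    · calc dist u p ≤ dist u z + dist z p := dist_triangle _ _ _
        _ ≤ r p := by linarith
    · calc dist v p ≤ dist v z + dist z p := dist_triangle _ _ _
        _ ≤ r p := by linarith
  -- constants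
  set δ : ℝ := min (ρ / 8) 1 with hδdef
  have hδpos : 0 < δ := lt_min (by linarith) one_pos
  have hδρ : δ ≤ ρ / 8 := min_le_left _ _
  have hδ1 : δ ≤ 1 := min_le_right _ _
  set D : ℝ := dist x y + 2 with hDdef
  have hD : 0 < D := by have := dist_nonneg (x := x) (y := y); linarith
  set h : ℝ := ρ / (8 * D) with hhdef
  have hh : 0 < h := by positivity
  have hhD : h * dist x y ≤ ρ / 8 := by
    have h1 : h * dist x y ≤ h * D := by
      have := dist_nonneg (x := x) (y := y)
      apply mul_le_mul_of_nonneg_left _ hh.le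
      rw [hDdef]; linarith
    have h2 : h * D = ρ / 8 := by
      rw [hhdef]; field_simp
    linarith
  refine ⟨δ, hδpos, ?_⟩
  intro y' hy' hyy'
  set F : ℝ → ℝ := fun t => infDist (geo x y' t) S with hFdef
  have hFcont : ContinuousOn F (Icc (0:ℝ) 1) :=
    (continuous_infDist_pt S).comp_continuousOn (geo_continuousOn x y')
  have hF0 : F 0 = 0 := by
    rw [hFdef]; simp only [geo_zero]; exact infDist_zero_of_mem hx
  have hF1 : F 1 = 0 := by
    rw [hFdef]; simp only [geo_one]; exact infDist_zero_of_mem hy'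
  have hFnn : ∀ t, 0 ≤ F t := fun t => infDist_nonneg
  have hclose : ∀ t ∈ Icc (0:ℝ) 1, dist (geo x y' t) (geo x y t) ≤ δ := by
    intro t ht
    rw [dist_comm]
    calc dist (geo x y t) (geo x y' t) ≤ t * dist y y' := dist_geo_geo_right x y y' ht
      _ ≤ 1 * δ := by
          apply mul_le_mul ht.2 hyy' dist_nonneg zero_le_one
      _ = δ := one_mul _
  have hFle : ∀ t ∈ Icc (0:ℝ) 1, F t ≤ δ := by
    intro t ht
    calc F t ≤ dist (geo x y' t) (geo x y t) := infDist_le_dist_of_mem (hbase t ht)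
      _ ≤ δ := hclose t ht
  -- midpoint inequality
  have hmid : ∀ a b : ℝ, 0 ≤ a → a ≤ b → b ≤ 1 → b - a ≤ h →
      F ((a + b) / 2) ≤ (F a + F b) / 2 := by
    intro a b ha0 hab hb1 hwin
    have ha : a ∈ Icc (0:ℝ) 1 := ⟨ha0, le_trans hab hb1⟩
    have hb : b ∈ Icc (0:ℝ) 1 := ⟨le_trans ha0 hab, hb1⟩
    have hm : (a + b) / 2 ∈ Icc (0:ℝ) 1 := ⟨by linarith, by linarith⟩
    have H : ∀ κ : ℝ, 0 < κ → κ ≤ δ → F ((a + b) / 2) ≤ (F a + F b) / 2 + κ := by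
      intro κ hκ hκδ
      obtain ⟨p, hpS, hpd⟩ := (infDist_lt_iff hSne).mp
        (show infDist (geo x y' a) S < F a + κ from lt_add_of_pos_right _ hκ)
      obtain ⟨q, hqS, hqd⟩ := (infDist_lt_iff hSne).mp
        (show infDist (geo x y' b) S < F b + κ from lt_add_of_pos_right _ hκ)
      have hFa := hFle a ha
      have hFb := hFle b hb
      have hd1 : dist p (geo x y a) ≤ ρ := by
        calc dist p (geo x y a) ≤ dist p (geo x y' a) + dist (geo x y' a) (geo x y a) :=
              dist_triangle _ _ _
          _ ≤ (F a + κ) + δ := by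
              rw [dist_comm p _]
              exact add_le_add hpd.le (hclose a ha)
          _ ≤ ρ := by linarith
      have hba : dist (geo x y b) (geo x y a) ≤ ρ / 8 := by
        rw [geo_dist x y b hb a ha, abs_of_nonneg (by linarith : (0:ℝ) ≤ b - a)]
        calc (b - a) * dist x y ≤ h * dist x y :=
              mul_le_mul_of_nonneg_right hwin dist_nonneg
          _ ≤ ρ / 8 := hhD
      have hd2 : dist q (geo x y a) ≤ ρ := by
        calc dist q (geo x y a)
            ≤ dist q (geo x y' b) + dist (geo x y' b) (geo x y b) +
              dist (geo x y b) (geo x y a) := dist_triangle4 _ _ _ _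
          _ ≤ ((F b + κ) + δ) + ρ / 8 := by
              rw [dist_comm q _]
              exact add_le_add (add_le_add hqd.le (hclose b hb)) hba
          _ ≤ ρ := by linarith
      have hhalf : (1:ℝ)/2 ∈ Icc (0:ℝ) 1 := ⟨by norm_num, by norm_num⟩
      have hw : geo p q (1/2) ∈ S :=
        huni (geo x y a) ⟨a, ha, rfl⟩ p q hpS hqS hd1 hd2 (1/2) hhalf
      have hrep : geo x y' ((a + b) / 2) = geo (geo x y' a) (geo x y' b) (1/2) := by
        rw [geo_reparam x y' ha hb hhalf]
        congr 1
        ring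
      calc F ((a + b) / 2) ≤ dist (geo x y' ((a + b) / 2)) (geo p q (1/2)) :=
            infDist_le_dist_of_mem hw
        _ = dist (geo (geo x y' a) (geo x y' b) (1/2)) (geo p q (1/2)) := by rw [hrep]
        _ ≤ (1 - 1/2) * dist (geo x y' a) p + (1/2) * dist (geo x y' b) q :=
            dist_geo_geo _ _ _ _ hhalf
        _ ≤ (F a + F b) / 2 + κ := by nlinarith [hpd, hqd]
    by_contra hcon
    push_neg at hcon
    set κ := min δ ((F ((a + b) / 2) - (F a + F b) / 2) / 2) with hκdef
    have hκpos : 0 < κ := lt_min hδpos (by linarith)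
    have h1 := H κ hκpos (min_le_left _ _)
    have h2 : κ ≤ (F ((a + b) / 2) - (F a + F b) / 2) / 2 := min_le_right _ _
    linarith
  -- maximum principle
  obtain ⟨tm, htm, htmax'⟩ := IsCompact.exists_isMaxOn isCompact_Icc
    ⟨0, left_mem_Icc.mpr zero_le_one⟩ hFcont
  have htmax : ∀ t ∈ Icc (0:ℝ) 1, F t ≤ F tm := fun t ht => htmax' ht
  by_cases hM : F tm ≤ 0
  · intro t ht
    have : F t = 0 := le_antisymm (le_trans (htmax t ht) hM) (hFnn t)
    exact (hS.mem_iff_infDist_zero hSne).mpr this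
  · exfalso
    push_neg at hM
    set A : Set ℝ := Icc (0:ℝ) 1 ∩ F ⁻¹' {F tm} with hAdef
    have hAclosed : IsClosed A :=
      hFcont.preimage_isClosed_of_isClosed isClosed_Icc isClosed_singleton
    have hAne : A.Nonempty := ⟨tm, htm, rfl⟩
    have hAbdd : BddBelow A := ⟨0, fun t ht => ht.1.1⟩
    set t0 := sInf A with ht0def
    have ht0A : t0 ∈ A := hAclosed.csInf_mem hAne hAbdd
    have ht0Icc : t0 ∈ Icc (0:ℝ) 1 := ht0A.1
    have hFt0 : F t0 = F tm := ht0A.2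
    have ht0pos : 0 < t0 := by
      rcases lt_or_eq_of_le ht0Icc.1 with h' | h'
      · exact h'
      · exfalso; rw [← h', hF0] at hFt0; linarith
    have ht0lt1 : t0 < 1 := by
      rcases lt_or_eq_of_le ht0Icc.2 with h' | h'
      · exact h'
      · exfalso; rw [h', hF1] at hFt0; linarith
    set h' : ℝ := min t0 (min (1 - t0) (h / 2)) with hh'def
    have hh'pos : 0 < h' := lt_min ht0pos (lt_min (by linarith) (by linarith))
    have hh't0 : h' ≤ t0 := min_le_left _ _
    have hh'1 : h' ≤ 1 - t0 := le_trans (min_le_right _ _) (min_le_left _ _)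
    have hh'h : h' ≤ h / 2 := le_trans (min_le_right _ _) (min_le_right _ _)
    have key := hmid (t0 - h') (t0 + h') (by linarith) (by linarith) (by linarith)
      (by linarith)
    rw [show (t0 - h' + (t0 + h')) / 2 = t0 by ring] at key
    have hamem : t0 - h' ∈ Icc (0:ℝ) 1 := ⟨by linarith, by linarith⟩
    have hbmem : t0 + h' ∈ Icc (0:ℝ) 1 := ⟨by linarith, by linarith⟩
    have hFa_le : F (t0 - h') ≤ F tm := htmax _ hamem
    have hFa_ne : F (t0 - h') ≠ F tm := by
      intro hcontra
      have : t0 - h' ∈ A := ⟨hamem, hcontra⟩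
      have := csInf_le hAbdd this
      rw [← ht0def] at this
      linarith
    have hFb_le : F (t0 + h') ≤ F tm := htmax _ hbmem
    have : F (t0 - h') < F tm := lt_of_le_of_ne hFa_le hFa_ne
    rw [hFt0] at key
    linarith

end Perturb
section Main
open CAT0
variable {X : Type*} [MetricSpace X] [CompleteSpace X] [CAT0 X]

lemma key_lemma (C₁ C₂ : Set X) (h₁closed : IsClosed C₁) (h₂closed : IsClosed C₂)
    (h₁conv : GConvex X C₁) (h₂conv : GConvex X C₂)
    (ε : ℝ) (hε : 0 < ε) (hconn : IsConnected (C₁ ∪ C₂))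
    (hloc : ∀ x ∈ frontier C₁ ∩ frontier C₂,
      GConvex X (closedBall x ε ∩ (C₁ ∪ C₂))) :
    ∀ x ∈ C₁, ∀ y ∈ C₂, ∀ t ∈ Icc (0:ℝ) 1, geo x y t ∈ C₁ ∪ C₂ := by
  intro x hx y hy
  by_cases hx2 : x ∈ C₂
  · exact fun t ht => Or.inr (h₂conv x hx2 y hy (geo_mem_seg x y ht))
  by_cases hy1 : y ∈ C₁
  · exact fun t ht => Or.inl (h₁conv x hx y hy1 (geo_mem_seg x y ht))
  -- get a point in the intersection from connectedness
  obtain ⟨z, hz1, hz2⟩ : ∃ z, z ∈ C₁ ∧ z ∈ C₂ := by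
    by_contra hcon
    push_neg at hcon
    have hdisj : Disjoint C₁ C₂ := by
      rw [Set.disjoint_iff_inter_eq_empty]
      ext w
      simp only [mem_inter_iff, mem_empty_iff_false, iff_false, not_and]
      exact hcon w
    have := ((isPreconnected_iff_subset_of_fully_disjoint_closed
      (h₁closed.union h₂closed)).mp hconn.2) C₁ C₂ h₁closed h₂closed
      (le_refl _) hdisj
    rcases this with h | h
    · exact hy1 (h (Or.inr hy))
    · exact hx2 (h (Or.inl hx))
  set U : Set X := C₁ ∪ C₂ with hUdef
  have hUclosed : IsClosed U := h₁closed.union h₂closed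
  have hUne : U.Nonempty := ⟨x, Or.inl hx⟩
  have hlocU := union_locConv h₁closed h₂closed h₁conv h₂conv hε hloc
  -- the sliding family
  set w : ℝ → X := fun θ => geo z y θ with hwdef
  have hwC₂ : ∀ θ ∈ Icc (0:ℝ) 1, w θ ∈ C₂ := fun θ hθ =>
    h₂conv z hz2 y hy (geo_mem_seg z y hθ)
  set Good : Set ℝ := {θ | θ ∈ Icc (0:ℝ) 1 ∧ ∀ t ∈ Icc (0:ℝ) 1, geo x (w θ) t ∈ U}
    with hGdef
  have h0G : (0:ℝ) ∈ Good := by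
    refine ⟨⟨le_refl _, zero_le_one⟩, fun t ht => ?_⟩
    have : w 0 = z := geo_zero z y
    rw [this]
    exact Or.inl (h₁conv x hx z hz1 (geo_mem_seg x z ht))
  have hGne : Good.Nonempty := ⟨0, h0G⟩
  have hGbdd : BddAbove Good := ⟨1, fun θ hθ => hθ.1.2⟩
  set θs := sSup Good with hθsdef
  have hθs0 : 0 ≤ θs := le_csSup hGbdd h0G
  have hθs1 : θs ≤ 1 := csSup_le hGne (fun θ hθ => hθ.1.2)
  have hθsIcc : θs ∈ Icc (0:ℝ) 1 := ⟨hθs0, hθs1⟩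
  -- the curve at θs is good (closedness)
  have hθsgood : ∀ t ∈ Icc (0:ℝ) 1, geo x (w θs) t ∈ U := by
    intro t ht
    rcases le_or_gt (infDist (geo x (w θs) t) U) 0 with hc | hc
    · exact (hUclosed.mem_iff_infDist_zero hUne).mpr
        (le_antisymm hc infDist_nonneg)
    · exfalso
      set c := infDist (geo x (w θs) t) U with hcdef
      have hdzy : (0:ℝ) ≤ dist z y := dist_nonneg
      have hc' : (0:ℝ) < c / (dist z y + 1) := by positivity
      obtain ⟨θ, hθG, hθgt⟩ := exists_lt_of_lt_csSup hGne
        (show θs - c / (dist z y + 1) < θs by linarith)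
      have hθle : θ ≤ θs := le_csSup hGbdd hθG
      have hPU : geo x (w θ) t ∈ U := hθG.2 t ht
      have hdw : dist (w θs) (w θ) = (θs - θ) * dist z y := by
        rw [hwdef]
        simp only
        rw [geo_dist z y θs hθsIcc θ hθG.1, abs_of_nonneg (by linarith : (0:ℝ) ≤ θs - θ)]
      have hdd : dist (geo x (w θs) t) (geo x (w θ) t) ≤ t * dist (w θs) (w θ) :=
        dist_geo_geo_right x (w θs) (w θ) ht
      have hinf : c ≤ dist (geo x (w θs) t) (geo x (w θ) t) :=
        infDist_le_dist_of_mem hPU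
      rw [hdw] at hdd
      have ht1 : t ≤ 1 := ht.2
      have ht0 : 0 ≤ t := ht.1
      have hkey : c ≤ (θs - θ) * dist z y := by
        calc c ≤ t * ((θs - θ) * dist z y) := le_trans hinf hdd
          _ ≤ 1 * ((θs - θ) * dist z y) := by
              apply mul_le_mul_of_nonneg_right ht1
              exact mul_nonneg (by linarith) hdzy
          _ = (θs - θ) * dist z y := one_mul _
      have hlt : (θs - θ) * dist z y < c := by
        have h1 : θs - θ < c / (dist z y + 1) := by linarith
        have h2 : (θs - θ) * dist z y ≤ (c / (dist z y + 1)) * dist z y := by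
          apply mul_le_mul_of_nonneg_right h1.le hdzy
        have h3 : (c / (dist z y + 1)) * dist z y < c := by
          rw [div_mul_eq_mul_div, div_lt_iff₀ (by linarith : (0:ℝ) < dist z y + 1)]
          nlinarith
        linarith
      linarith
  -- openness via the perturbation lemma
  obtain ⟨δ, hδpos, hδ⟩ := perturb hUclosed hlocU x (w θs) (Or.inl hx) hθsgood
  rcases eq_or_lt_of_le hθs1 with hθseq | hθslt
  · intro t ht
    have : w θs = y := by rw [hwdef]; simp only; rw [hθseq]; exact geo_one z y
    rw [← this]
    exact hθsgood t ht
  · exfalso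
    have hdzy : (0:ℝ) ≤ dist z y := dist_nonneg
    set θ'' : ℝ := min 1 (θs + δ / (dist z y + 1)) with hθ''def
    have hθ''gt : θs < θ'' := by
      apply lt_min hθslt
      have : (0:ℝ) < δ / (dist z y + 1) := by positivity
      linarith
    have hθ''Icc : θ'' ∈ Icc (0:ℝ) 1 := ⟨le_trans hθs0 hθ''gt.le, min_le_left _ _⟩
    have hθ''G : θ'' ∈ Good := by
      refine ⟨hθ''Icc, ?_⟩
      apply hδ (w θ'') (Or.inr (hwC₂ θ'' hθ''Icc))
      rw [hwdef]
      simp only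
      rw [geo_dist z y θs hθsIcc θ'' hθ''Icc,
        abs_of_nonpos (by linarith : θs - θ'' ≤ 0)]
      have hle : θ'' - θs ≤ δ / (dist z y + 1) := by
        have := min_le_right 1 (θs + δ / (dist z y + 1))
        rw [hθ''def]
        linarith [this]
      calc -(θs - θ'') * dist z y = (θ'' - θs) * dist z y := by ring
        _ ≤ (δ / (dist z y + 1)) * dist z y := mul_le_mul_of_nonneg_right hle hdzy
        _ ≤ δ := by
            rw [div_mul_eq_mul_div, div_le_iff₀ (by linarith : (0:ℝ) < dist z y + 1)]
            nlinarith
    have := le_csSup hGbdd hθ''G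
    linarith

end Main

theorem stmt2 {X : Type*} [MetricSpace X] [CompleteSpace X] [CAT0 X]
    (C₁ C₂ : Set X) (h₁closed : IsClosed C₁) (h₂closed : IsClosed C₂)
    (h₁conv : GConvex X C₁) (h₂conv : GConvex X C₂)
    (ε : ℝ) (hε : 0 < ε) (hconn : IsConnected (C₁ ∪ C₂))
    (hloc : ∀ x ∈ frontier C₁ ∩ frontier C₂,
      GConvex X (closedBall x ε ∩ (C₁ ∪ C₂))) :
    GConvex X (C₁ ∪ C₂) := by
  intro x hx y hy p hp
  obtain ⟨t, ht, rfl⟩ := hp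
  rcases hx with hx1 | hx2
  · rcases hy with hy1 | hy2
    · exact Or.inl (h₁conv x hx1 y hy1 (geo_mem_seg x y ht))
    · exact key_lemma C₁ C₂ h₁closed h₂closed h₁conv h₂conv ε hε hconn hloc
        x hx1 y hy2 t ht
  · rcases hy with hy1 | hy2
    · have hconn' : IsConnected (C₂ ∪ C₁) := by rwa [Set.union_comm]
      have hloc' : ∀ w ∈ frontier C₂ ∩ frontier C₁,
          GConvex X (closedBall w ε ∩ (C₂ ∪ C₁)) := by
        intro w hw
        rw [Set.union_comm]
        exact hloc w ⟨hw.2, hw.1⟩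
      have := key_lemma C₂ C₁ h₂closed h₁closed h₂conv h₁conv ε hε hconn' hloc'
        x hx2 y hy1 t ht
      rwa [Set.union_comm] at this
    · exact Or.inr (h₂conv x hx2 y hy2 (geo_mem_seg x y ht))
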